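/- Under the hypotheses of the preceding setup (partition x_0 < ... < x_n, constant β > 0, f continuously differentiable, u twice continuously differentiable with βu'' = −f, u(x_0) = u(x_n) = 0, nodal values c_i with c_0 = c_n = 0 solving the Galerkin equations with the hat functions, and u_h^{new} defined element-wise by u_h^{new}(x) = c_k·(x_{k+1}−x)/(x_{k+1}−x_k) + c_{k+1}·(x−x_k)/(x_{k+1}−x_k) − (1/(2β))(x−x_k)(x−x_{k+1})·f(x) on [x_k, x_{k+1}]), one has ( ∫_{x_0}^{x_n} (u(x) − u_h^{new}(x))^2 dx )^{1/2} ≤ √(x_n − x_0) · (h^3/(8β)) · sup_{t∈[x_0,x_n]} |f'(t)|, where h = max_k (x_{k+1} − x_k). -/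

import Mathlib

/-- The hat (piecewise linear) basis function associated with the nodes `xm < xc < xp`:
it equals `(t−xm)/(xc−xm)` on `[xm,xc]`, `(xp−t)/(xp−xc)` on `[xc,xp]`, and `0` otherwise. -/
noncomputable def hatFun (xm xc xp : ℝ) (t : ℝ) : ℝ :=
  if t ∈ Set.Icc xm xc then (t - xm) / (xc - xm)
  else if t ∈ Set.Icc xc xp then (xp - t) / (xp - xc)
  else 0

open Set MeasureTheory intervalIntegral

/-- Integration by parts: ∫_a^c (s-a) u'' = (c-a) u'(c) - (u c - u a). -/
lemma ibp1 (a c : ℝ) (hac : a ≤ c) (u u' u'' : ℝ → ℝ)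
    (hu : ContinuousOn u (Icc a c)) (hu' : ContinuousOn u' (Icc a c))
    (hu'' : ContinuousOn u'' (Icc a c))
    (hd : ∀ t ∈ Ioo a c, HasDerivAt u (u' t) t)
    (hd2 : ∀ t ∈ Ioo a c, HasDerivAt u' (u'' t) t) :
    ∫ s in a..c, (s - a) * u'' s = (c - a) * u' c - (u c - u a) := by
  have hint : IntervalIntegrable (fun s => (s - a) * u'' s) volume a c := by
    apply ContinuousOn.intervalIntegrable
    rw [uIcc_of_le hac]
    exact (continuousOn_id.sub continuousOn_const).mul hu''
  have := integral_eq_sub_of_hasDeriv_right_of_le hac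
    (f := fun s => (s - a) * u' s - u s) (f' := fun s => (s - a) * u'' s)
    (((continuousOn_id.sub continuousOn_const).mul hu').sub hu)
    (fun t ht => by
      have h1 : HasDerivAt (fun s => (s - a) * u' s - u s)
          (1 * u' t + (t - a) * u'' t - u' t) t := by
        exact (((hasDerivAt_id t).sub_const a).mul (hd2 t ht)).sub (hd t ht)
      have h2 : 1 * u' t + (t - a) * u'' t - u' t = (t - a) * u'' t := by ring
      rw [h2] at h1
      exact h1.hasDerivWithinAt) hint
  rw [this]; ring

/-- Integration by parts: ∫_c^b (b-s) u'' = (u b - u c) - (b-c) u'(c). -/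
lemma ibp2 (c b : ℝ) (hcb : c ≤ b) (u u' u'' : ℝ → ℝ)
    (hu : ContinuousOn u (Icc c b)) (hu' : ContinuousOn u' (Icc c b))
    (hu'' : ContinuousOn u'' (Icc c b))
    (hd : ∀ t ∈ Ioo c b, HasDerivAt u (u' t) t)
    (hd2 : ∀ t ∈ Ioo c b, HasDerivAt u' (u'' t) t) :
    ∫ s in c..b, (b - s) * u'' s = (u b - u c) - (b - c) * u' c := by
  have hint : IntervalIntegrable (fun s => (b - s) * u'' s) volume c b := by
    apply ContinuousOn.intervalIntegrable
    rw [uIcc_of_le hcb]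
    exact (continuousOn_const.sub continuousOn_id).mul hu''
  have := integral_eq_sub_of_hasDeriv_right_of_le hcb
    (f := fun s => (b - s) * u' s + u s) (f' := fun s => (b - s) * u'' s)
    (((continuousOn_const.sub continuousOn_id).mul hu').add hu)
    (fun t ht => by
      have h1 : HasDerivAt (fun s => (b - s) * u' s + u s)
          ((0 - 1) * u' t + (b - t) * u'' t + u' t) t := by
        exact (((hasDerivAt_const t b).sub (hasDerivAt_id t)).mul (hd2 t ht)).add (hd t ht)
      have h2 : (0 - 1) * u' t + (b - t) * u'' t + u' t = (b - t) * u'' t := by ring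
      rw [h2] at h1
      exact h1.hasDerivWithinAt) hint
  rw [this]; ring

lemma integral_linear_left (a t : ℝ) : ∫ s in a..t, (s - a) = (t - a) ^ 2 / 2 := by
  have h : ∀ s ∈ uIcc a t, HasDerivAt (fun s => (s - a) ^ 2 / 2) (s - a) s := by
    intro s _
    have h1 : HasDerivAt (fun s => (s - a) ^ 2 / 2) ((2 : ℕ) * (s - a) ^ 1 * 1 / 2) s :=
      (((hasDerivAt_id s).sub_const a).pow 2).div_const 2
    convert h1 using 1
    push_cast
    ring
  rw [intervalIntegral.integral_eq_sub_of_hasDerivAt h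
    (Continuous.intervalIntegrable (by continuity) _ _)]
  ring

lemma integral_linear_right (t b : ℝ) : ∫ s in t..b, (b - s) = (b - t) ^ 2 / 2 := by
  have h : ∀ s ∈ uIcc t b, HasDerivAt (fun s => -((b - s) ^ 2 / 2)) (b - s) s := by
    intro s _
    have h1 : HasDerivAt (fun s => -((b - s) ^ 2 / 2)) (-((2 : ℕ) * (b - s) ^ 1 * (0 - 1) / 2)) s :=
      ((((hasDerivAt_const s b).sub (hasDerivAt_id s)).pow 2).div_const 2).neg
    convert h1 using 1
    push_cast
    ring
  rw [intervalIntegral.integral_eq_sub_of_hasDerivAt h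
    (Continuous.intervalIntegrable (by continuity) _ _)]
  ring

set_option maxHeartbeats 1000000 in
/-- Pointwise error bound on a single element. -/
lemma elem_err (a b : ℝ) (hab : a < b) (β M : ℝ) (hβ : 0 < β) (hM : 0 ≤ M)
    (u u' u'' f : ℝ → ℝ)
    (hu : ContinuousOn u (Icc a b)) (hu' : ContinuousOn u' (Icc a b))
    (hu''c : ContinuousOn u'' (Icc a b))
    (hd : ∀ t ∈ Ioo a b, HasDerivAt u (u' t) t)
    (hd2 : ∀ t ∈ Ioo a b, HasDerivAt u' (u'' t) t)
    (hode : ∀ t ∈ Icc a b, β * u'' t = -f t)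
    (hlip : ∀ s ∈ Icc a b, ∀ t ∈ Icc a b, |f t - f s| ≤ M * |t - s|)
    (t : ℝ) (ht : t ∈ Icc a b) :
    |u t - (u a * (b - t) / (b - a) + u b * (t - a) / (b - a)
        - 1 / (2 * β) * (t - a) * (t - b) * f t)| ≤ (b - a) ^ 3 / (8 * β) * M := by
  obtain ⟨hta, htb⟩ := ht
  have hba : (0:ℝ) < b - a := by linarith
  have hβ' : β ≠ 0 := ne_of_gt hβ
  set C := M / β * (b - a) with hC
  have hC0 : 0 ≤ C := by
    rw [hC]; exact mul_nonneg (div_nonneg hM hβ.le) hba.le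
  have hu''lip : ∀ s ∈ Icc a b, |u'' t - u'' s| ≤ C := by
    intro s hs
    have h1 : u'' t - u'' s = (f s - f t) / β := by
      have e1 := hode t ⟨hta, htb⟩
      have e2 := hode s hs
      rw [eq_div_iff hβ']
      linear_combination e1 - e2
    rw [h1, abs_div, abs_of_pos hβ, div_le_iff₀ hβ]
    have h3 := hlip t ⟨hta, htb⟩ s hs
    have h4 : |s - t| ≤ b - a := by
      rw [abs_le]; constructor <;> [linarith [hs.1, hs.2]; linarith [hs.1, hs.2]]
    calc |f s - f t| ≤ M * |s - t| := h3
      _ ≤ M * (b - a) := by nlinarith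
      _ = C * β := by rw [hC]; field_simp
  set A1 := ∫ s in a..t, (s - a) * u'' s with hA1
  set A2 := ∫ s in t..b, (b - s) * u'' s with hA2
  have hIcc1 : Icc a t ⊆ Icc a b := Icc_subset_Icc le_rfl htb
  have hIcc2 : Icc t b ⊆ Icc a b := Icc_subset_Icc hta le_rfl
  have hIoo1 : Ioo a t ⊆ Ioo a b := Ioo_subset_Ioo le_rfl htb
  have hIoo2 : Ioo t b ⊆ Ioo a b := Ioo_subset_Ioo hta le_rfl
  have e1 : A1 = (t - a) * u' t - (u t - u a) :=
    ibp1 a t hta u u' u'' (hu.mono hIcc1) (hu'.mono hIcc1) (hu''c.mono hIcc1)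
      (fun s hs => hd s (hIoo1 hs)) (fun s hs => hd2 s (hIoo1 hs))
  have e2 : A2 = (u b - u t) - (b - t) * u' t :=
    ibp2 t b htb u u' u'' (hu.mono hIcc2) (hu'.mono hIcc2) (hu''c.mono hIcc2)
      (fun s hs => hd s (hIoo2 hs)) (fun s hs => hd2 s (hIoo2 hs))
  set D1 := ∫ s in a..t, (s - a) * (u'' t - u'' s) with hD1
  set D2 := ∫ s in t..b, (b - s) * (u'' t - u'' s) with hD2
  have hi1 : IntervalIntegrable (fun s => (s - a) * u'' s) volume a t := by
    apply ContinuousOn.intervalIntegrable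
    rw [uIcc_of_le hta]
    exact ((continuousOn_id.sub continuousOn_const).mul (hu''c.mono hIcc1))
  have hi2 : IntervalIntegrable (fun s => (b - s) * u'' s) volume t b := by
    apply ContinuousOn.intervalIntegrable
    rw [uIcc_of_le htb]
    exact ((continuousOn_const.sub continuousOn_id).mul (hu''c.mono hIcc2))
  have hc1 : IntervalIntegrable (fun s => (s - a) * u'' t) volume a t :=
    (continuous_id.sub continuous_const).mul continuous_const |>.intervalIntegrable a t
  have hc2 : IntervalIntegrable (fun s => (b - s) * u'' t) volume t b :=
    (continuous_const.sub continuous_id).mul continuous_const |>.intervalIntegrable t b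
  have d1eq : D1 = (t - a)^2 / 2 * u'' t - A1 := by
    have h : D1 = (∫ s in a..t, (s - a) * u'' t) - A1 := by
      rw [hD1, hA1, ← intervalIntegral.integral_sub hc1 hi1]
      congr 1; funext s; ring
    rw [h]
    congr 1
    rw [intervalIntegral.integral_mul_const, integral_linear_left]
  have d2eq : D2 = (b - t)^2 / 2 * u'' t - A2 := by
    have h : D2 = (∫ s in t..b, (b - s) * u'' t) - A2 := by
      rw [hD2, hA2, ← intervalIntegral.integral_sub hc2 hi2]
      congr 1; funext s; ring
    rw [h]
    congr 1
    rw [intervalIntegral.integral_mul_const, integral_linear_right]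
  have bd1 : |D1| ≤ C * ((t - a)^2 / 2) := by
    have hval : (∫ s in a..t, (s - a) * C) = C * ((t - a)^2/2) := by
      rw [intervalIntegral.integral_mul_const, integral_linear_left]; ring
    have hb := intervalIntegral.norm_integral_le_abs_of_norm_le
      (f := fun s => (s - a) * (u'' t - u'' s)) (g := fun s => (s - a) * C)
      (a := a) (b := t) (μ := volume)
      ?_ ?_
    · calc |D1| = ‖(∫ s in a..t, (s - a) * (u'' t - u'' s))‖ := (Real.norm_eq_abs _).symm
        _ ≤ |∫ s in a..t, (s - a) * C| := hb
        _ = C * ((t - a)^2/2) := by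
            rw [hval, abs_of_nonneg (mul_nonneg hC0 (by positivity))]
    · filter_upwards [MeasureTheory.ae_restrict_mem measurableSet_Ioc] with s hs
      rw [uIoc_of_le hta] at hs
      have hs1 : a < s := hs.1
      have hs2 : s ≤ t := hs.2
      rw [Real.norm_eq_abs, abs_mul, abs_of_pos (by linarith : (0:ℝ) < s - a)]
      have := hu''lip s ⟨by linarith, by linarith⟩
      nlinarith [abs_nonneg (u'' t - u'' s)]
    · exact (continuous_id.sub continuous_const).mul continuous_const |>.intervalIntegrable a t
  have bd2 : |D2| ≤ C * ((b - t)^2 / 2) := by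
    have hval : (∫ s in t..b, (b - s) * C) = C * ((b - t)^2/2) := by
      rw [intervalIntegral.integral_mul_const, integral_linear_right]; ring
    have hb := intervalIntegral.norm_integral_le_abs_of_norm_le
      (f := fun s => (b - s) * (u'' t - u'' s)) (g := fun s => (b - s) * C)
      (a := t) (b := b) (μ := volume)
      ?_ ?_
    · calc |D2| = ‖(∫ s in t..b, (b - s) * (u'' t - u'' s))‖ := (Real.norm_eq_abs _).symm
        _ ≤ |∫ s in t..b, (b - s) * C| := hb
        _ = C * ((b - t)^2/2) := by
            rw [hval, abs_of_nonneg (mul_nonneg hC0 (by positivity))]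
    · filter_upwards [MeasureTheory.ae_restrict_mem measurableSet_Ioc] with s hs
      rw [uIoc_of_le htb] at hs
      have hs1 : t < s := hs.1
      have hs2 : s ≤ b := hs.2
      rw [Real.norm_eq_abs, abs_mul, abs_of_nonneg (by linarith : (0:ℝ) ≤ b - s)]
      have := hu''lip s ⟨by linarith, by linarith⟩
      nlinarith [abs_nonneg (u'' t - u'' s)]
    · exact (continuous_const.sub continuous_id).mul continuous_const |>.intervalIntegrable t b
  have hft : f t = -(β * u'' t) := by have := hode t ⟨hta, htb⟩; linarith
  have erep : u t - (u a * (b - t) / (b - a) + u b * (t - a) / (b - a)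
      - 1 / (2 * β) * (t - a) * (t - b) * f t)
      = ((b - t) * D1 + (t - a) * D2) / (b - a) := by
    rw [d1eq, d2eq, e1, e2, hft]
    field_simp
    ring
  rw [erep, abs_div, abs_of_pos hba, div_le_iff₀ hba]
  have key : |(b - t) * D1 + (t - a) * D2|
      ≤ (b - t) * (C * ((t - a)^2/2)) + (t - a) * (C * ((b - t)^2/2)) := by
    calc |(b - t) * D1 + (t - a) * D2| ≤ |(b - t) * D1| + |(t - a) * D2| := abs_add_le _ _
      _ = (b - t) * |D1| + (t - a) * |D2| := by
          rw [abs_mul, abs_mul, abs_of_nonneg (by linarith : (0:ℝ) ≤ b - t),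
            abs_of_nonneg (by linarith : (0:ℝ) ≤ t - a)]
      _ ≤ (b - t) * (C * ((t - a)^2/2)) + (t - a) * (C * ((b - t)^2/2)) :=
          add_le_add (mul_le_mul_of_nonneg_left bd1 (by linarith))
            (mul_le_mul_of_nonneg_left bd2 (by linarith))
  have hfin : (b - t) * (C * ((t - a)^2/2)) + (t - a) * (C * ((b - t)^2/2))
      ≤ (b - a) ^ 3 / (8 * β) * M * (b - a) := by
    have hsum : (b - t) * (C * ((t - a)^2/2)) + (t - a) * (C * ((b - t)^2/2))
        = C * ((t - a) * (b - t)) * (b - a) / 2 := by ring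
    rw [hsum, hC]
    have hq : (t - a) * (b - t) ≤ (b - a)^2 / 4 := by nlinarith [sq_nonneg ((t - a) - (b - t))]
    have h8 : (b - a) ^ 3 / (8 * β) * M * (b - a)
        = M / β * (b - a) * ((b - a)^2/4) * (b - a) / 2 := by
      field_simp; ring
    rw [h8]
    have hm : (0:ℝ) ≤ M / β * (b - a) * (b - a) :=
      mul_nonneg (mul_nonneg (div_nonneg hM hβ.le) hba.le) hba.le
    nlinarith [mul_le_mul_of_nonneg_left hq hm]
  exact key.trans hfin

set_option maxHeartbeats 1000000 in
/-- The exact solution satisfies the Galerkin equation. -/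
lemma node_integral (a cc b : ℝ) (hac : a < cc) (hcb : cc < b) (β : ℝ) (hβ : 0 < β)
    (u u' u'' f : ℝ → ℝ)
    (hu : ContinuousOn u (Icc a b)) (hu' : ContinuousOn u' (Icc a b))
    (hu''c : ContinuousOn u'' (Icc a b)) (hfc : ContinuousOn f (Icc a b))
    (hd : ∀ t ∈ Ioo a b, HasDerivAt u (u' t) t)
    (hd2 : ∀ t ∈ Ioo a b, HasDerivAt u' (u'' t) t)
    (hode : ∀ t ∈ Icc a b, β * u'' t = -f t) :
    ∫ t in a..b, f t * hatFun a cc b t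
      = β * ((u cc - u a) / (cc - a) - (u b - u cc) / (b - cc)) := by
  have hca : cc - a ≠ 0 := by intro h; linarith [hac]
  have hbc : b - cc ≠ 0 := by intro h; linarith [hcb]
  have hIcc1 : Icc a cc ⊆ Icc a b := Icc_subset_Icc le_rfl hcb.le
  have hIcc2 : Icc cc b ⊆ Icc a b := Icc_subset_Icc hac.le le_rfl
  have hIoo1 : Ioo a cc ⊆ Ioo a b := Ioo_subset_Ioo le_rfl hcb.le
  have hIoo2 : Ioo cc b ⊆ Ioo a b := Ioo_subset_Ioo hac.le le_rfl
  -- piecewise formulas for hatFun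
  have heq1 : EqOn (fun t => f t * hatFun a cc b t)
      (fun t => -β / (cc - a) * ((t - a) * u'' t)) (Icc a cc) := by
    intro t ht
    have hft : f t = -(β * u'' t) := by linarith [hode t (hIcc1 ht)]
    simp only [hatFun, if_pos ht, hft]
    ring
  have heq2 : EqOn (fun t => f t * hatFun a cc b t)
      (fun t => -β / (b - cc) * ((b - t) * u'' t)) (Icc cc b) := by
    intro t ht
    have hft : f t = -(β * u'' t) := by linarith [hode t (hIcc2 ht)]
    have hhat : hatFun a cc b t = (b - t) / (b - cc) := by
      by_cases h : t ∈ Icc a cc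
      · have htc : t = cc := le_antisymm h.2 ht.1
        subst htc
        simp only [hatFun, if_pos h]
        rw [div_self hca, div_self hbc]
      · simp only [hatFun, if_neg h, if_pos ht]
    simp only [hhat, hft]
    ring
  -- integrability of the pieces
  have hint1 : IntervalIntegrable (fun t => f t * hatFun a cc b t) volume a cc := by
    have hg : IntervalIntegrable (fun t => -β / (cc - a) * ((t - a) * u'' t)) volume a cc := by
      apply ContinuousOn.intervalIntegrable
      rw [uIcc_of_le hac.le]
      exact (continuousOn_const.mul ((continuousOn_id.sub continuousOn_const).mul
        (hu''c.mono hIcc1)))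
    refine hg.congr ?_
    intro t ht
    rw [uIoc_of_le hac.le] at ht
    exact (heq1 ⟨ht.1.le, ht.2⟩).symm
  have hint2 : IntervalIntegrable (fun t => f t * hatFun a cc b t) volume cc b := by
    have hg : IntervalIntegrable (fun t => -β / (b - cc) * ((b - t) * u'' t)) volume cc b := by
      apply ContinuousOn.intervalIntegrable
      rw [uIcc_of_le hcb.le]
      exact (continuousOn_const.mul ((continuousOn_const.sub continuousOn_id).mul
        (hu''c.mono hIcc2)))
    refine hg.congr ?_
    intro t ht
    rw [uIoc_of_le hcb.le] at ht
    exact (heq2 ⟨ht.1.le, ht.2⟩).symm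
  -- split the integral
  rw [← intervalIntegral.integral_add_adjacent_intervals hint1 hint2]
  -- compute the two pieces
  have hP1 : ∫ t in a..cc, f t * hatFun a cc b t
      = -β / (cc - a) * ((cc - a) * u' cc - (u cc - u a)) := by
    rw [intervalIntegral.integral_congr (by rwa [uIcc_of_le hac.le] : EqOn _ _ (uIcc a cc))]
    rw [intervalIntegral.integral_const_mul]
    rw [ibp1 a cc hac.le u u' u'' (hu.mono hIcc1) (hu'.mono hIcc1) (hu''c.mono hIcc1)
      (fun s hs => hd s (hIoo1 hs)) (fun s hs => hd2 s (hIoo1 hs))]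
  have hP2 : ∫ t in cc..b, f t * hatFun a cc b t
      = -β / (b - cc) * ((u b - u cc) - (b - cc) * u' cc) := by
    rw [intervalIntegral.integral_congr (by rwa [uIcc_of_le hcb.le] : EqOn _ _ (uIcc cc b))]
    rw [intervalIntegral.integral_const_mul]
    rw [ibp2 cc b hcb.le u u' u'' (hu.mono hIcc2) (hu'.mono hIcc2) (hu''c.mono hIcc2)
      (fun s hs => hd s (hIoo2 hs)) (fun s hs => hd2 s (hIoo2 hs))]
  rw [hP1, hP2]
  field_simp
  ring


set_option maxHeartbeats 2000000

/-- The posterior-corrected `P₁` finite element solution `u_h^{new}`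
satisfies the third-order `L²` bound
`‖u − u_h^{new}‖_{L²} ≤ √(x_n − x_0) · (h³/(8β)) · sup |f'|`, where `h` is the mesh size. -/
theorem posterior_corrected_fem_third_order_L2
    (n : ℕ) (hn : 1 ≤ n) (x : ℕ → ℝ) (hx : ∀ i < n, x i < x (i + 1))
    (β : ℝ) (hβ : 0 < β) (f f' u u' u'' : ℝ → ℝ)
    (hf' : ∀ t ∈ Set.Icc (x 0) (x n), HasDerivWithinAt f (f' t) (Set.Icc (x 0) (x n)) t)
    (hf'c : ContinuousOn f' (Set.Icc (x 0) (x n)))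
    (hu' : ∀ t ∈ Set.Icc (x 0) (x n), HasDerivWithinAt u (u' t) (Set.Icc (x 0) (x n)) t)
    (hu'' : ∀ t ∈ Set.Icc (x 0) (x n), HasDerivWithinAt u' (u'' t) (Set.Icc (x 0) (x n)) t)
    (hu''c : ContinuousOn u'' (Set.Icc (x 0) (x n)))
    (hode : ∀ t ∈ Set.Icc (x 0) (x n), β * u'' t = -f t)
    (hu0 : u (x 0) = 0) (hun : u (x n) = 0)
    (c : ℕ → ℝ) (hc0 : c 0 = 0) (hcn : c n = 0)
    (hgal : ∀ i, 1 ≤ i → i ≤ n - 1 →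
      β * ((c i - c (i - 1)) / (x i - x (i - 1)) - (c (i + 1) - c i) / (x (i + 1) - x i))
        = ∫ t in (x (i - 1))..(x (i + 1)), f t * hatFun (x (i - 1)) (x i) (x (i + 1)) t)
    (uhnew : ℝ → ℝ)
    (huh : ∀ k < n, ∀ t ∈ Set.Icc (x k) (x (k + 1)),
      uhnew t = c k * (x (k + 1) - t) / (x (k + 1) - x k)
        + c (k + 1) * (t - x k) / (x (k + 1) - x k)
        - 1 / (2 * β) * (t - x k) * (t - x (k + 1)) * f t)
    (H : ℝ)
    (hH : H = (Finset.range n).sup' (Finset.nonempty_range_iff.mpr (by omega))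
      (fun k => x (k + 1) - x k)) :
    Real.sqrt (∫ t in (x 0)..(x n), (u t - uhnew t) ^ 2)
      ≤ Real.sqrt (x n - x 0) * (H ^ 3 / (8 * β))
        * ⨆ s : Set.Icc (x 0) (x n), |f' s| := by
  have hβ' : β ≠ 0 := ne_of_gt hβ
  -- monotonicity of nodes
  have key : ∀ m, ∀ i, i + m ≤ n → x i ≤ x (i + m) := by
    intro m
    induction m with
    | zero => intro i _; simp
    | succ m ih =>
      intro i h
      have h1 : i + (m + 1) = i + m + 1 := by omega
      rw [h1]
      exact (ih i (by omega)).trans (hx (i + m) (by omega)).le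
  have hxm : ∀ i j, i ≤ j → j ≤ n → x i ≤ x j := by
    intro i j hij hjn
    have := key (j - i) i (by omega)
    rwa [Nat.add_sub_cancel' hij] at this
  have h0n : x 0 < x n :=
    lt_of_lt_of_le (hx 0 (by omega)) (hxm 1 n (by omega) le_rfl)
  -- continuity
  have hfc : ContinuousOn f (Set.Icc (x 0) (x n)) :=
    fun t ht => (hf' t ht).continuousWithinAt
  have huc : ContinuousOn u (Set.Icc (x 0) (x n)) :=
    fun t ht => (hu' t ht).continuousWithinAt
  have hu'c : ContinuousOn u' (Set.Icc (x 0) (x n)) :=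
    fun t ht => (hu'' t ht).continuousWithinAt
  -- interior derivatives
  have hdAt : ∀ t ∈ Ioo (x 0) (x n), HasDerivAt u (u' t) t :=
    fun t ht => (hu' t ⟨ht.1.le, ht.2.le⟩).hasDerivAt (Icc_mem_nhds ht.1 ht.2)
  have hd2At : ∀ t ∈ Ioo (x 0) (x n), HasDerivAt u' (u'' t) t :=
    fun t ht => (hu'' t ⟨ht.1.le, ht.2.le⟩).hasDerivAt (Icc_mem_nhds ht.1 ht.2)
  -- the sup bound on f'
  set M := ⨆ s : Set.Icc (x 0) (x n), |f' s| with hM'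
  have hbdd : BddAbove (Set.range fun s : Set.Icc (x 0) (x n) => |f' s|) := by
    have heq : (Set.range fun s : Set.Icc (x 0) (x n) => |f' s|)
        = (fun t => |f' t|) '' (Set.Icc (x 0) (x n)) := by
      rw [show (fun s : Set.Icc (x 0) (x n) => |f' ↑s|)
        = (fun t => |f' t|) ∘ (Subtype.val) from rfl, Set.range_comp, Subtype.range_coe]
    rw [heq]
    exact IsCompact.bddAbove_image isCompact_Icc hf'c.abs
  have hMle : ∀ t ∈ Set.Icc (x 0) (x n), |f' t| ≤ M :=
    fun t ht => le_ciSup hbdd (⟨t, ht⟩ : Set.Icc (x 0) (x n))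
  have hM0 : 0 ≤ M := le_trans (abs_nonneg _) (hMle (x 0) ⟨le_rfl, h0n.le⟩)
  have hlip : ∀ s ∈ Set.Icc (x 0) (x n), ∀ t ∈ Set.Icc (x 0) (x n),
      |f t - f s| ≤ M * |t - s| := by
    intro s hs t ht
    have := Convex.norm_image_sub_le_of_norm_hasDerivWithin_le
      (fun z hz => hf' z hz) (fun z hz => (hMle z hz).trans le_rfl)
      (convex_Icc _ _) hs ht
    simpa [Real.norm_eq_abs] using this
  -- mesh size bounds
  have hHk : ∀ k < n, x (k + 1) - x k ≤ H := by
    intro k hk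
    rw [hH]
    exact Finset.le_sup' (fun k => x (k + 1) - x k) (Finset.mem_range.mpr hk)
  have hH0 : 0 < H :=
    lt_of_lt_of_le (sub_pos.mpr (hx 0 (by omega))) (hHk 0 (by omega))
  -- nodal exactness
  have hrel : ∀ j, j + 1 ≤ n - 1 →
      (c (j+1) - u (x (j+1)) - (c j - u (x j))) / (x (j+1) - x j)
      = (c (j+2) - u (x (j+2)) - (c (j+1) - u (x (j+1)))) / (x (j+2) - x (j+1)) := by
    intro j hj
    have hg := hgal (j+1) (by omega) hj
    simp only [Nat.add_sub_cancel] at hg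
    have hsub : Set.Icc (x j) (x (j+2)) ⊆ Set.Icc (x 0) (x n) :=
      Set.Icc_subset_Icc (hxm 0 j (by omega) (by omega)) (hxm (j+2) n (by omega) le_rfl)
    have hIoo : Ioo (x j) (x (j+2)) ⊆ Ioo (x 0) (x n) :=
      Set.Ioo_subset_Ioo (hxm 0 j (by omega) (by omega)) (hxm (j+2) n (by omega) le_rfl)
    have hx2 : x (j+1) < x (j+1+1) := hx (j+1) (by omega)
    have hni := node_integral (x j) (x (j+1)) (x (j+2)) (hx j (by omega)) hx2 β hβ
      u u' u'' f (huc.mono hsub) (hu'c.mono hsub) (hu''c.mono hsub) (hfc.mono hsub)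
      (fun s hs => hdAt s (hIoo hs)) (fun s hs => hd2At s (hIoo hs))
      (fun s hs => hode s (hsub hs))
    rw [hni] at hg
    have heq := mul_left_cancel₀ hβ' hg
    have hne1 : x (j+1) - x j ≠ 0 := ne_of_gt (sub_pos.mpr (hx j (by omega)))
    have hne2 : x (j+2) - x (j+1) ≠ 0 := ne_of_gt (sub_pos.mpr hx2)
    rw [div_eq_div_iff hne1 hne2]
    field_simp at heq
    linear_combination heq
  set S := (c 1 - u (x 1) - (c 0 - u (x 0))) / (x 1 - x 0) with hS
  have hslope : ∀ j, j ≤ n - 1 →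
      (c (j+1) - u (x (j+1)) - (c j - u (x j))) / (x (j+1) - x j) = S := by
    intro j
    induction j with
    | zero => intro _; exact hS.symm
    | succ j ih =>
      intro hj
      rw [← hrel j hj]
      exact ih (by omega)
  have htel : ∀ i, i ≤ n → c i - u (x i) = S * (x i - x 0) := by
    intro i
    induction i with
    | zero => intro _; rw [hc0, hu0]; ring
    | succ i ih =>
      intro hi
      have hs := hslope i (by omega)
      have hne : x (i+1) - x i ≠ 0 := ne_of_gt (sub_pos.mpr (hx i (by omega)))
      have hstep : c (i+1) - u (x (i+1)) - (c i - u (x i)) = S * (x (i+1) - x i) := by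
        rw [← hs]
        exact (div_mul_cancel₀ _ hne).symm
      linear_combination hstep + ih (by omega)
  have hS0 : S = 0 := by
    have h1 := htel n le_rfl
    rw [hcn, hun] at h1
    have h2 : S * (x n - x 0) = 0 := by linarith
    rcases mul_eq_zero.mp h2 with h | h
    · exact h
    · exfalso; linarith
  have hnode : ∀ i, i ≤ n → c i = u (x i) := by
    intro i hi
    have := htel i hi
    rw [hS0, zero_mul] at this
    linarith
  -- elementwise bound
  set B := H ^ 3 / (8 * β) * M with hB
  have hB0 : 0 ≤ B := by
    rw [hB]
    exact mul_nonneg (div_nonneg (pow_nonneg hH0.le 3) (by linarith)) hM0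
  have hsubk : ∀ k < n, Set.Icc (x k) (x (k+1)) ⊆ Set.Icc (x 0) (x n) :=
    fun k hk => Set.Icc_subset_Icc (hxm 0 k (by omega) (by omega)) (hxm (k+1) n (by omega) le_rfl)
  have hIook : ∀ k < n, Ioo (x k) (x (k+1)) ⊆ Ioo (x 0) (x n) :=
    fun k hk => Set.Ioo_subset_Ioo (hxm 0 k (by omega) (by omega)) (hxm (k+1) n (by omega) le_rfl)
  have hbound : ∀ k < n, ∀ t ∈ Set.Icc (x k) (x (k+1)), |u t - uhnew t| ≤ B := by
    intro k hk t ht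
    rw [huh k hk t ht, hnode k (by omega), hnode (k+1) (by omega)]
    have h1 := elem_err (x k) (x (k+1)) (hx k hk) β M hβ hM0 u u' u'' f
      (huc.mono (hsubk k hk)) (hu'c.mono (hsubk k hk)) (hu''c.mono (hsubk k hk))
      (fun s hs => hdAt s (hIook k hk hs)) (fun s hs => hd2At s (hIook k hk hs))
      (fun s hs => hode s (hsubk k hk hs))
      (fun s hs t' ht' => hlip s (hsubk k hk hs) t' (hsubk k hk ht')) t ht
    refine h1.trans ?_
    have h3 : (x (k+1) - x k) ^ 3 ≤ H ^ 3 :=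
      pow_le_pow_left₀ (sub_nonneg.mpr (hx k hk).le) (hHk k hk) 3
    have h8 : (0:ℝ) < 8 * β := by linarith
    rw [hB]
    exact mul_le_mul_of_nonneg_right ((div_le_div_iff_of_pos_right h8).mpr h3) hM0
  -- integrability on each element
  have hek : ∀ k < n, IntervalIntegrable (fun t => (u t - uhnew t) ^ 2) volume
      (x k) (x (k+1)) := by
    intro k hk
    have hcont : ContinuousOn (fun t => (u t - (c k * (x (k + 1) - t) / (x (k + 1) - x k)
        + c (k + 1) * (t - x k) / (x (k + 1) - x k)
        - 1 / (2 * β) * (t - x k) * (t - x (k + 1)) * f t)) ^ 2)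
        (Set.Icc (x k) (x (k+1))) := by
      apply ContinuousOn.pow
      apply ContinuousOn.sub (huc.mono (hsubk k hk))
      apply ContinuousOn.sub
      · exact ((continuousOn_const.mul (continuousOn_const.sub continuousOn_id)).div_const _).add
          ((continuousOn_const.mul (continuousOn_id.sub continuousOn_const)).div_const _)
      · exact ((continuousOn_const.mul (continuousOn_id.sub continuousOn_const)).mul
          (continuousOn_id.sub continuousOn_const)).mul (hfc.mono (hsubk k hk))
    have hg : IntervalIntegrable (fun t => (u t - (c k * (x (k + 1) - t) / (x (k + 1) - x k)
        + c (k + 1) * (t - x k) / (x (k + 1) - x k)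
        - 1 / (2 * β) * (t - x k) * (t - x (k + 1)) * f t)) ^ 2) volume (x k) (x (k+1)) := by
      apply ContinuousOn.intervalIntegrable
      rwa [uIcc_of_le (hx k hk).le]
    refine hg.congr ?_
    intro t ht
    rw [uIoc_of_le (hx k hk).le] at ht
    beta_reduce
    rw [huh k hk t ⟨ht.1.le, ht.2⟩]
  -- sum over elements
  have hsplit := intervalIntegral.sum_integral_adjacent_intervals
    (f := fun t => (u t - uhnew t) ^ 2) (μ := volume) (a := x) (n := n) hek
  have hkey : (∫ t in (x 0)..(x n), (u t - uhnew t) ^ 2) ≤ (x n - x 0) * B ^ 2 := by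
    rw [← hsplit]
    have hpiece : ∀ k ∈ Finset.range n,
        (∫ t in (x k)..(x (k+1)), (u t - uhnew t) ^ 2) ≤ (x (k+1) - x k) * B ^ 2 := by
      intro k hk'
      have hk : k < n := Finset.mem_range.mp hk'
      have h1 : (∫ t in (x k)..(x (k+1)), (u t - uhnew t) ^ 2)
          ≤ ∫ _ in (x k)..(x (k+1)), B ^ 2 := by
        apply intervalIntegral.integral_mono_on (hx k hk).le (hek k hk)
          (intervalIntegrable_const)
        intro t ht
        have h2 := hbound k hk t ht
        calc (u t - uhnew t) ^ 2 = |u t - uhnew t| ^ 2 := (sq_abs _).symm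
          _ ≤ B ^ 2 := pow_le_pow_left₀ (abs_nonneg _) h2 2
      rw [intervalIntegral.integral_const, smul_eq_mul] at h1
      exact h1
    calc ∑ k ∈ Finset.range n, ∫ t in (x k)..(x (k+1)), (u t - uhnew t) ^ 2
        ≤ ∑ k ∈ Finset.range n, (x (k+1) - x k) * B ^ 2 := Finset.sum_le_sum hpiece
      _ = (∑ k ∈ Finset.range n, (x (k+1) - x k)) * B ^ 2 := (Finset.sum_mul _ _ _).symm
      _ = (x n - x 0) * B ^ 2 := by rw [Finset.sum_range_sub (fun k => x k)]
  calc Real.sqrt (∫ t in (x 0)..(x n), (u t - uhnew t) ^ 2)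
      ≤ Real.sqrt ((x n - x 0) * B ^ 2) := Real.sqrt_le_sqrt hkey
    _ = Real.sqrt (x n - x 0) * Real.sqrt (B ^ 2) := Real.sqrt_mul (by linarith) _
    _ = Real.sqrt (x n - x 0) * B := by rw [Real.sqrt_sq hB0]
    _ = Real.sqrt (x n - x 0) * (H ^ 3 / (8 * β)) * M := by rw [hB]; ring
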